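/- arXiv:1909.00635 — 3 statements merged into one kernel-verified Lean document; each statement's English description precedes it below -/
import Mathlib

section
/- Let λ > -1/2, -1 < s < 1, and k ≥ 2 an integer. Then ∫_{-1}^{1} |x-s| (1-x²)^{λ-1/2} C_k^λ(x) dx = (8λ(λ+1) / (k(k-1)(k+2λ)(k+2λ+1))) (1-s²)^{λ+3/2} C_{k-2}^{λ+2}(s). -/
open scoped Real BigOperators

/-- Pochhammer symbol `(lam)_m`. -/
noncomputable def poch (lam : ℝ) (m : ℕ) : ℝ := (ascPochhammer ℝ m).eval lam

/-- Gegenbauer polynomial `C_k^lam(x)`, via its explicit representation. -/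
noncomputable def gegen (lam : ℝ) (k : ℕ) (x : ℝ) : ℝ :=
  ∑ j ∈ Finset.range (k / 2 + 1),
    (-1 : ℝ) ^ j * poch lam (k - j) / ((Nat.factorial j : ℝ) * (Nat.factorial (k - 2 * j) : ℝ))
      * (2 * x) ^ (k - 2 * j)

open Nat Finset Set

noncomputable def tA (lam : ℝ) (n j : ℕ) : ℝ :=
  (-1 : ℝ) ^ j * poch lam (n - j) / ((Nat.factorial j : ℝ) * (Nat.factorial (n - 2 * j) : ℝ))

noncomputable def dgegen (lam : ℝ) (k : ℕ) (x : ℝ) : ℝ :=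
  ∑ j ∈ Finset.range (k / 2 + 1),
    tA lam k j * (((k - 2 * j : ℕ) : ℝ) * (2 * x) ^ (k - 2 * j - 1) * 2)

lemma poch_succ_left (lam : ℝ) (m : ℕ) : poch lam (m+1) = lam * poch (lam+1) m := by
  unfold poch
  rw [ascPochhammer_succ_left]
  simp [Polynomial.eval_comp]

lemma poch_succ_right (lam : ℝ) (m : ℕ) : poch lam (m+1) = poch lam m * (lam + m) :=
  ascPochhammer_succ_eval m lam

lemma gegen_eq_tA (lam : ℝ) (k : ℕ) (x : ℝ) :
    gegen lam k x = ∑ j ∈ Finset.range (k / 2 + 1), tA lam k j * (2 * x) ^ (k - 2 * j) := rfl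

noncomputable def uT (μ : ℝ) (n : ℕ) (x : ℝ) (j : ℕ) : ℝ :=
  4 * μ * ((n - 2 * j : ℕ) : ℝ) * tA (μ+1) n j * (2 * x) ^ (n - 2 * j - 1)

noncomputable def vT (μ : ℝ) (n : ℕ) (x : ℝ) (j : ℕ) : ℝ :=
  -(μ * (((n - 2 * j : ℕ) : ℝ) + 2 * μ + 1)) * tA (μ+1) n j * (2 * x) ^ (n - 2 * j + 1)

noncomputable def cT (μ : ℝ) (n : ℕ) (x : ℝ) (j : ℕ) : ℝ :=
  -(((n : ℝ) + 1) * ((n : ℝ) + 2 * μ + 1)) * tA μ (n+1) j * (2 * x) ^ (n + 1 - 2 * j)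

lemma step1 (μ : ℝ) (n : ℕ) (x : ℝ) :
    2 * μ * ((1 - x^2) * dgegen (μ+1) n x - (2*μ+1) * (x * gegen (μ+1) n x))
      = ∑ j ∈ Finset.range (n / 2 + 1), (uT μ n x j + vT μ n x j) := by
  rw [gegen_eq_tA]
  unfold dgegen
  rw [Finset.mul_sum, Finset.mul_sum, Finset.mul_sum, ← Finset.sum_sub_distrib, Finset.mul_sum]
  refine Finset.sum_congr rfl fun j hj => ?_
  have hj' : 2 * j ≤ n := by
    have := Finset.mem_range.mp hj; omega
  unfold uT vT
  rcases e : n - 2 * j with _ | m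
  · norm_num
    ring
  · have e1 : m + 1 - 1 = m := rfl
    rw [e1]
    push_cast
    rw [pow_succ, pow_succ, pow_succ]
    ring

lemma step2 (μ : ℝ) (n : ℕ) (x : ℝ) :
    -(((n:ℝ)+1) * ((n:ℝ)+2*μ+1)) * gegen μ (n+1) x
      = ∑ j ∈ Finset.range ((n+1) / 2 + 1), cT μ n x j := by
  rw [gegen_eq_tA, Finset.mul_sum]
  exact Finset.sum_congr rfl fun j _ => by unfold cT; ring

lemma coef1 (μ : ℝ) (i d : ℕ) :
    -((2*(i+1)+d : ℝ)+1) * ((2*(i+1)+d : ℝ)+2*μ+1) *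
        ((-1:ℝ)^(i+1) * poch μ (i+d+2) / (((i+1)! : ℝ) * ((d+1)! : ℝ)))
      = 4*μ*((d:ℝ)+2) * ((-1:ℝ)^i * poch (μ+1) (i+d+2) / ((i ! : ℝ) * ((d+2)! : ℝ)))
        - μ*((d:ℝ)+2*μ+1) * ((-1:ℝ)^(i+1) * poch (μ+1) (i+d+1) / (((i+1)! : ℝ) * (d ! : ℝ))) := by
  have h1 : poch μ (i+d+2) = μ * poch (μ+1) (i+d+1) := poch_succ_left _ _
  have h2 : poch (μ+1) (i+d+2) = poch (μ+1) (i+d+1) * ((μ+1) + (i+d+1 : ℕ)) :=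
    poch_succ_right _ _
  have f1 : ((i+1)! : ℝ) = (i+1) * i ! := by rw [Nat.factorial_succ]; push_cast; ring
  have f2 : ((d+2)! : ℝ) = (d+2) * ((d+1) * d !) := by
    rw [Nat.factorial_succ, Nat.factorial_succ]; push_cast; ring
  have f3 : ((d+1)! : ℝ) = (d+1) * d ! := by rw [Nat.factorial_succ]; push_cast; ring
  have hi : (i ! : ℝ) ≠ 0 := Nat.cast_ne_zero.mpr (Nat.factorial_ne_zero _)
  have hd : (d ! : ℝ) ≠ 0 := Nat.cast_ne_zero.mpr (Nat.factorial_ne_zero _)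
  have hi1 : (i : ℝ) + 1 ≠ 0 := by positivity
  have hd1 : (d : ℝ) + 1 ≠ 0 := by positivity
  have hd2 : (d : ℝ) + 2 ≠ 0 := by positivity
  rw [h1, h2, f1, f2, f3]
  push_cast
  field_simp
  ring

lemma coef0 (μ : ℝ) (n : ℕ) :
    -((n:ℝ)+1) * ((n:ℝ)+2*μ+1) * ((-1:ℝ)^0 * poch μ (n+1) / ((0! : ℝ) * ((n+1)! : ℝ)))
      = -(μ*((n:ℝ)+2*μ+1)) * ((-1:ℝ)^0 * poch (μ+1) n / ((0! : ℝ) * (n ! : ℝ))) := by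
  have h1 : poch μ (n+1) = μ * poch (μ+1) n := poch_succ_left _ _
  have f1 : ((n+1)! : ℝ) = (n+1) * n ! := by rw [Nat.factorial_succ]; push_cast; ring
  have hn : (n ! : ℝ) ≠ 0 := Nat.cast_ne_zero.mpr (Nat.factorial_ne_zero _)
  have hn1 : (n : ℝ) + 1 ≠ 0 := by positivity
  rw [h1, f1]
  field_simp

lemma coefLast (μ : ℝ) (p : ℕ) :
    -((2*(p:ℝ)+1)+1) * ((2*(p:ℝ)+1)+2*μ+1) *
        ((-1:ℝ)^(p+1) * poch μ (p+1) / (((p+1)! : ℝ) * (0! : ℝ)))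
      = 4*μ*((1:ℕ):ℝ) * ((-1:ℝ)^p * poch (μ+1) (p+1) / ((p ! : ℝ) * (1! : ℝ))) := by
  have h1 : poch μ (p+1) = μ * poch (μ+1) p := poch_succ_left _ _
  have h2 : poch (μ+1) (p+1) = poch (μ+1) p * ((μ+1) + (p : ℕ)) := poch_succ_right _ _
  have f1 : ((p+1)! : ℝ) = (p+1) * p ! := by rw [Nat.factorial_succ]; push_cast; ring
  have hp : (p ! : ℝ) ≠ 0 := Nat.cast_ne_zero.mpr (Nat.factorial_ne_zero _)
  have hp1 : (p : ℝ) + 1 ≠ 0 := by positivity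
  rw [h1, h2, f1]
  push_cast
  field_simp
  ring

lemma coef0v (μ : ℝ) (n : ℕ) (x : ℝ) : vT μ n x 0 = cT μ n x 0 := by
  unfold vT cT tA
  simp only [Nat.mul_zero, Nat.sub_zero]
  linear_combination (-(2*x) ^ (n+1)) * coef0 μ n

lemma coef1v (μ : ℝ) (n : ℕ) (x : ℝ) (j : ℕ) (hj : 2*(j+1) ≤ n) :
    uT μ n x j + vT μ n x (j+1) = cT μ n x (j+1) := by
  obtain ⟨d, rfl⟩ : ∃ d, n = 2*(j+1)+d := ⟨n - 2*(j+1), by omega⟩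
  unfold uT vT cT tA
  rw [show 2*(j+1)+d - 2*j - 1 = d+1 from by omega,
      show 2*(j+1)+d - 2*j = d+2 from by omega,
      show 2*(j+1)+d - j = j+d+2 from by omega,
      show 2*(j+1)+d - 2*(j+1) = d from by omega,
      show 2*(j+1)+d - (j+1) = j+d+1 from by omega,
      show 2*(j+1)+d+1 - 2*(j+1) = d+1 from by omega,
      show 2*(j+1)+d+1 - (j+1) = j+d+2 from by omega]
  push_cast
  linear_combination (-(2*x) ^ (d+1)) * coef1 μ j d

lemma coefLastv (μ : ℝ) (p : ℕ) (x : ℝ) :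
    uT μ (2*p+1) x p = cT μ (2*p+1) x (p+1) := by
  unfold uT cT tA
  rw [show 2*p+1 - 2*p - 1 = 0 from by omega,
      show 2*p+1 - 2*p = 1 from by omega,
      show 2*p+1 - p = p+1 from by omega,
      show 2*p+1+1 - 2*(p+1) = 0 from by omega,
      show 2*p+1+1 - (p+1) = p+1 from by omega]
  push_cast
  linear_combination (-1 : ℝ) * coefLast μ p

lemma key_identity (μ : ℝ) (n : ℕ) (x : ℝ) :
    2 * μ * ((1 - x^2) * dgegen (μ+1) n x - (2*μ+1) * (x * gegen (μ+1) n x))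
      = -(((n:ℝ)+1) * ((n:ℝ)+2*μ+1)) * gegen μ (n+1) x := by
  rw [step1, step2]
  rcases Nat.even_or_odd n with ⟨p, hp⟩ | ⟨p, hp⟩
  · have hn : n = 2*p := by omega
    subst hn
    rw [show 2*p/2 = p from by omega, show (2*p+1)/2 = p from by omega]
    rw [Finset.sum_add_distrib, Finset.sum_range_succ (f := uT μ (2*p) x),
        Finset.sum_range_succ' (f := vT μ (2*p) x),
        Finset.sum_range_succ' (f := cT μ (2*p) x)]
    have hu : uT μ (2*p) x p = 0 := by
      unfold uT
      rw [show 2*p - 2*p = 0 from by omega]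
      norm_num
    have hsum : ∑ i ∈ Finset.range p, uT μ (2*p) x i
          + ∑ i ∈ Finset.range p, vT μ (2*p) x (i+1)
        = ∑ i ∈ Finset.range p, cT μ (2*p) x (i+1) := by
      rw [← Finset.sum_add_distrib]
      exact Finset.sum_congr rfl fun i hi =>
        coef1v μ (2*p) x i (by have := Finset.mem_range.mp hi; omega)
    rw [hu, coef0v]
    linarith [hsum]
  · have hn : n = 2*p+1 := by omega
    subst hn
    rw [show (2*p+1)/2 = p from by omega, show (2*p+1+1)/2 = p+1 from by omega]
    rw [Finset.sum_add_distrib, Finset.sum_range_succ (f := uT μ (2*p+1) x),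
        Finset.sum_range_succ' (f := vT μ (2*p+1) x),
        Finset.sum_range_succ (f := cT μ (2*p+1) x),
        Finset.sum_range_succ' (f := cT μ (2*p+1) x)]
    have hsum : ∑ i ∈ Finset.range p, uT μ (2*p+1) x i
          + ∑ i ∈ Finset.range p, vT μ (2*p+1) x (i+1)
        = ∑ i ∈ Finset.range p, cT μ (2*p+1) x (i+1) := by
      rw [← Finset.sum_add_distrib]
      exact Finset.sum_congr rfl fun i hi =>
        coef1v μ (2*p+1) x i (by have := Finset.mem_range.mp hi; omega)
    rw [coef0v, coefLastv]
    linarith [hsum]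
lemma gegen_zero (k : ℕ) (hk : 1 ≤ k) (x : ℝ) : gegen 0 k x = 0 := by
  unfold gegen
  refine Finset.sum_eq_zero fun j hj => ?_
  have hj' : j ≤ k / 2 := by have := Finset.mem_range.mp hj; omega
  obtain ⟨t, ht⟩ : ∃ t, k - j = t + 1 := ⟨k - j - 1, by omega⟩
  rw [ht, poch_succ_left]
  simp

lemma gegen_continuous (lam : ℝ) (k : ℕ) : Continuous (fun x => gegen lam k x) := by
  unfold gegen
  exact continuous_finset_sum _ fun j _ =>
    continuous_const.mul ((continuous_const.mul continuous_id).pow _)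

lemma gegen_hasDerivAt (lam : ℝ) (k : ℕ) (x : ℝ) :
    HasDerivAt (fun y => gegen lam k y) (dgegen lam k x) x := by
  unfold gegen dgegen
  apply HasDerivAt.fun_sum
  intro j _
  have h2x : HasDerivAt (fun y : ℝ => 2 * y) 2 x := by
    simpa using (hasDerivAt_id x).const_mul (2:ℝ)
  have := (h2x.pow (k - 2*j)).const_mul
    ((-1 : ℝ) ^ j * poch lam (k - j) / ((Nat.factorial j : ℝ) * (Nat.factorial (k - 2 * j) : ℝ)))
  exact this

lemma rpow_comp_continuous (q : ℝ) (hq : 0 < q) : Continuous (fun x : ℝ => (1 - x^2) ^ q) := by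
  rw [continuous_iff_continuousAt]
  intro x
  exact (Real.continuousAt_rpow_const _ _ (Or.inr hq.le)).comp (by fun_prop)

lemma rpow_comp_hasDerivAt (q : ℝ) {x : ℝ} (hx : x ∈ Set.Ioo (-1:ℝ) 1) :
    HasDerivAt (fun y : ℝ => (1 - y^2) ^ q) (q * (1 - x^2) ^ (q - 1) * (-(2*x))) x := by
  have hb : (0:ℝ) < 1 - x^2 := by nlinarith [hx.1, hx.2]
  have h1 : HasDerivAt (fun y : ℝ => 1 - y^2) (-(2*x)) x := by
    simpa using ((hasDerivAt_pow 2 x).const_sub 1)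
  exact (Real.hasDerivAt_rpow_const (x := 1 - x^2) (p := q) (Or.inl hb.ne')).comp x h1

lemma F_hasDerivAt (μ : ℝ) (n : ℕ) {x : ℝ} (hx : x ∈ Set.Ioo (-1:ℝ) 1) :
    HasDerivAt (fun y => (1 - y^2) ^ (μ + 1/2) * gegen (μ+1) n y)
      ((1 - x^2) ^ (μ - 1/2) *
        ((1 - x^2) * dgegen (μ+1) n x - (2*μ+1) * (x * gegen (μ+1) n x))) x := by
  have hb : (0:ℝ) < 1 - x^2 := by nlinarith [hx.1, hx.2]
  have h1 := (rpow_comp_hasDerivAt (μ + 1/2) hx).fun_mul (gegen_hasDerivAt (μ+1) n x)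
  refine h1.congr_deriv ?_
  rw [show μ + 1/2 - 1 = μ - 1/2 by ring,
      show μ + 1/2 = (μ - 1/2) + 1 by ring, Real.rpow_add_one hb.ne']
  ring

lemma II_right (r : ℝ) (hr : -1 < r) (g : ℝ → ℝ) (hg : Continuous g)
    {a : ℝ} (ha : -1 < a) (hab : a ≤ 1) :
    IntervalIntegrable (fun y => (1 - y^2) ^ r * g y) MeasureTheory.volume a 1 := by
  have h0 : IntervalIntegrable (fun y : ℝ => y ^ r) MeasureTheory.volume (1-a) (1-1) :=
    intervalIntegral.intervalIntegrable_rpow' hr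
  have h1 : IntervalIntegrable (fun y : ℝ => (1-y) ^ r) MeasureTheory.volume a 1 := by
    simpa using h0.comp_sub_left 1
  have hcont : ContinuousOn (fun y : ℝ => (1+y) ^ r * g y) (Set.uIcc a 1) := by
    rw [Set.uIcc_of_le hab]
    refine ContinuousOn.mul ?_ hg.continuousOn
    refine ContinuousOn.rpow_const ?_ fun y hy => Or.inl ?_
    · fun_prop
    · have : -1 < y := lt_of_lt_of_le ha hy.1
      exact ne_of_gt (by linarith)
  have h2 := h1.mul_continuousOn hcont
  refine h2.congr_ae ?_
  refine (MeasureTheory.ae_restrict_iff' measurableSet_uIoc).mpr (MeasureTheory.ae_of_all _ ?_)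
  intro y hy
  rw [Set.uIoc_of_le hab] at hy
  have hy1 : (0:ℝ) ≤ 1 - y := by linarith [hy.2]
  have hy2 : (0:ℝ) ≤ 1 + y := by linarith [hy.1]
  show (1-y)^r * ((1+y)^r * g y) = (1 - y^2)^r * g y
  rw [show (1 - y^2 : ℝ) = (1-y) * (1+y) by ring, Real.mul_rpow hy1 hy2]
  ring

lemma II_left (r : ℝ) (hr : -1 < r) (g : ℝ → ℝ) (hg : Continuous g)
    {b : ℝ} (hb : b < 1) (hab : -1 ≤ b) :
    IntervalIntegrable (fun y => (1 - y^2) ^ r * g y) MeasureTheory.volume (-1) b := by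
  have h0 : IntervalIntegrable (fun y : ℝ => y ^ r) MeasureTheory.volume (-1+1) (b+1) :=
    intervalIntegral.intervalIntegrable_rpow' hr
  have h1 : IntervalIntegrable (fun y : ℝ => (y+1) ^ r) MeasureTheory.volume (-1) b := by
    simpa using h0.comp_add_right 1
  have hcont : ContinuousOn (fun y : ℝ => (1-y) ^ r * g y) (Set.uIcc (-1) b) := by
    rw [Set.uIcc_of_le hab]
    refine ContinuousOn.mul ?_ hg.continuousOn
    refine ContinuousOn.rpow_const ?_ fun y hy => Or.inl ?_
    · fun_prop
    · have h' : y < 1 := lt_of_le_of_lt hy.2 hb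
      exact ne_of_gt (by linarith)
  have h2 := h1.mul_continuousOn hcont
  refine h2.congr_ae ?_
  refine (MeasureTheory.ae_restrict_iff' measurableSet_uIoc).mpr (MeasureTheory.ae_of_all _ ?_)
  intro y hy
  rw [Set.uIoc_of_le hab] at hy
  have hy1 : (0:ℝ) ≤ 1 - y := by linarith [le_of_lt (lt_of_le_of_lt hy.2 hb)]
  have hy2 : (0:ℝ) ≤ 1 + y := by linarith [hy.1]
  show (y+1)^r * ((1-y)^r * g y) = (1 - y^2)^r * g y
  rw [show (1 - y^2 : ℝ) = (y+1) * (1-y) by ring, Real.mul_rpow (by linarith [hy.1] : (0:ℝ) ≤ y+1) hy1]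
  ring

lemma F_hasDerivAt' (μ : ℝ) (hμ : μ ≠ 0) (n : ℕ) {x : ℝ} (hx : x ∈ Set.Ioo (-1:ℝ) 1) :
    HasDerivAt (fun y => (1 - y^2) ^ (μ + 1/2) * gegen (μ+1) n y)
      (-((((n:ℝ)+1) * ((n:ℝ)+2*μ+1)) / (2*μ)) * ((1 - x^2) ^ (μ - 1/2) * gegen μ (n+1) x)) x := by
  have h := F_hasDerivAt μ n hx
  convert h using 1
  have hk := key_identity μ n x
  have h2μ : (2*μ : ℝ) ≠ 0 := by simpa using hμ
  have e : -((((n:ℝ)+1) * ((n:ℝ)+2*μ+1)) / (2*μ)) * ((1 - x^2) ^ (μ - 1/2) * gegen μ (n+1) x)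
      = (-((((n:ℝ)+1) * ((n:ℝ)+2*μ+1)) * gegen μ (n+1) x) * (1 - x^2) ^ (μ - 1/2)) / (2*μ) := by
    ring
  rw [e, div_eq_iff h2μ]
  linear_combination (-(1 - x^2) ^ (μ - 1/2)) * hk

set_option maxHeartbeats 1000000 in
theorem gegenbauer_abs_integral (lam s : ℝ) (hlam : -1/2 < lam) (hs : -1 < s) (hs' : s < 1)
    (k : ℕ) (hk : 2 ≤ k) :
    ∫ x in (-1:ℝ)..1, |x - s| * (1 - x^2) ^ (lam - 1/2) * gegen lam k x
      = 8 * lam * (lam + 1)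
          / ((k : ℝ) * ((k : ℝ) - 1) * ((k : ℝ) + 2*lam) * ((k : ℝ) + 2*lam + 1))
        * (1 - s^2) ^ (lam + 3/2) * gegen (lam + 2) (k - 2) s := by
  obtain ⟨m, rfl⟩ : ∃ m, k = m + 2 := ⟨k - 2, by omega⟩
  clear hk
  rw [show m + 2 - 2 = m from by omega]
  by_cases hl0 : lam = 0
  · have hz : (∫ x in (-1:ℝ)..1, |x - s| * (1 - x^2) ^ (lam - 1/2) * gegen lam (m+2) x)
        = ∫ x in (-1:ℝ)..1, (0:ℝ) := by
      apply intervalIntegral.integral_congr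
      intro x _
      show |x - s| * (1 - x^2) ^ (lam - 1/2) * gegen lam (m+2) x = (0:ℝ)
      rw [hl0, gegen_zero (m+2) (by omega)]
      ring
    rw [hz, hl0]
    simp
  have hlam1 : (0:ℝ) < lam + 1 := by linarith
  have hlam12 : (0:ℝ) < lam + 1/2 := by linarith
  have hlam32 : (0:ℝ) < lam + 3/2 := by linarith
  have hmR : (0:ℝ) ≤ (m:ℝ) := Nat.cast_nonneg m
  have hF : ∀ x ∈ Set.Ioo (-1:ℝ) 1,
      HasDerivAt (fun y => (1 - y^2) ^ (lam + 1/2) * gegen (lam+1) (m+1) y)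
        ((-((((m:ℝ)+2) * ((m:ℝ)+2+2*lam)) / (2*lam)))
          * ((1 - x^2) ^ (lam - 1/2) * gegen lam (m+2) x)) x := by
    intro x hx
    have h := F_hasDerivAt' lam hl0 (m+1) hx
    rw [show m+1+1 = m+2 from by omega] at h
    convert h using 1
    push_cast
    ring
  have hG : ∀ x ∈ Set.Ioo (-1:ℝ) 1,
      HasDerivAt (fun y => (1 - y^2) ^ (lam + 3/2) * gegen (lam+2) m y)
        ((-((((m:ℝ)+1) * ((m:ℝ)+2*lam+3)) / (2*(lam+1))))
          * ((1 - x^2) ^ (lam + 1/2) * gegen (lam+1) (m+1) x)) x := by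
    intro x hx
    have h := F_hasDerivAt' (lam+1) (by positivity) m hx
    simp only [show lam+1+1/2 = lam+3/2 from by ring, show lam+1-1/2 = lam+1/2 from by ring,
      show lam+1+1 = lam+2 from by ring] at h
    convert h using 1
    push_cast
    ring_nf
  set δ : ℝ := -((((m:ℝ)+2) * ((m:ℝ)+2+2*lam)) / (2*lam)) with hδdef
  set β : ℝ := -((((m:ℝ)+1) * ((m:ℝ)+2*lam+3)) / (2*(lam+1))) with hβdef
  have hA1 : (0:ℝ) < ((m:ℝ)+2) * ((m:ℝ)+2+2*lam) := by nlinarith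
  have hA2 : (0:ℝ) < ((m:ℝ)+1) * ((m:ℝ)+2*lam+3) := by nlinarith
  have hδ : δ ≠ 0 := by
    rw [hδdef]
    exact neg_ne_zero.mpr (div_ne_zero hA1.ne' (by simpa using hl0))
  have hβ : β ≠ 0 := by
    rw [hβdef]
    exact neg_ne_zero.mpr (div_ne_zero hA2.ne' (by positivity))
  set V : ℝ → ℝ := fun y =>
      (1/δ) * ((y - s) * ((1 - y^2) ^ (lam + 1/2) * gegen (lam+1) (m+1) y))
      - (1/(δ*β)) * ((1 - y^2) ^ (lam + 3/2) * gegen (lam+2) m y) with hVdef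
  have hVd : ∀ x ∈ Set.Ioo (-1:ℝ) 1,
      HasDerivAt V ((x - s) * ((1 - x^2) ^ (lam - 1/2) * gegen lam (m+2) x)) x := by
    intro x hx
    have hV := ((((hasDerivAt_id x).sub_const s).fun_mul (hF x hx)).const_mul (1/δ)).sub
      ((hG x hx).const_mul (1/(δ*β)))
    refine hV.congr_deriv ?_
    simp only [id_eq]
    field_simp
    ring
  have hVc : Continuous V := by
    apply Continuous.sub
    · exact continuous_const.mul ((continuous_id.sub continuous_const).mul
        ((rpow_comp_continuous _ hlam12).mul (gegen_continuous _ _)))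
    · exact continuous_const.mul ((rpow_comp_continuous _ hlam32).mul (gegen_continuous _ _))
  set f : ℝ → ℝ := fun y => (y - s) * ((1 - y^2) ^ (lam - 1/2) * gegen lam (m+2) y) with hfdef
  have hfr : IntervalIntegrable f MeasureTheory.volume s 1 := by
    have h := II_right (lam - 1/2) (by linarith) (fun y => (y - s) * gegen lam (m+2) y)
      ((continuous_id.sub continuous_const).mul (gegen_continuous _ _)) hs hs'.le
    have he : (fun y => (1 - y^2) ^ (lam - 1/2) * ((y - s) * gegen lam (m+2) y)) = f := by
      funext y; rw [hfdef]; ring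
    rwa [he] at h
  have hfl : IntervalIntegrable f MeasureTheory.volume (-1) s := by
    have h := II_left (lam - 1/2) (by linarith) (fun y => (y - s) * gegen lam (m+2) y)
      ((continuous_id.sub continuous_const).mul (gegen_continuous _ _)) hs' hs.le
    have he : (fun y => (1 - y^2) ^ (lam - 1/2) * ((y - s) * gegen lam (m+2) y)) = f := by
      funext y; rw [hfdef]; ring
    rwa [he] at h
  have ftc1 : ∫ y in s..1, f y = V 1 - V s :=
    intervalIntegral.integral_eq_sub_of_hasDerivAt_of_le hs'.le hVc.continuousOn
      (fun x hx => hVd x ⟨lt_trans hs hx.1, hx.2⟩) hfr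
  have ftc2 : ∫ y in (-1:ℝ)..s, f y = V s - V (-1) :=
    intervalIntegral.integral_eq_sub_of_hasDerivAt_of_le hs.le hVc.continuousOn
      (fun x hx => hVd x ⟨hx.1, lt_trans hx.2 hs'⟩) hfl
  set fa : ℝ → ℝ := fun x => |x - s| * (1 - x^2) ^ (lam - 1/2) * gegen lam (m+2) x with hfadef
  have hfar : IntervalIntegrable fa MeasureTheory.volume s 1 := by
    refine hfr.congr_ae ?_
    refine (MeasureTheory.ae_restrict_iff' measurableSet_uIoc).mpr (MeasureTheory.ae_of_all _ ?_)
    intro y hy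
    rw [Set.uIoc_of_le hs'.le] at hy
    show (y - s) * ((1 - y^2) ^ (lam - 1/2) * gegen lam (m+2) y)
      = |y - s| * (1 - y^2) ^ (lam - 1/2) * gegen lam (m+2) y
    rw [abs_of_nonneg (by linarith [hy.1.le] : (0:ℝ) ≤ y - s)]
    ring
  have hfal : IntervalIntegrable fa MeasureTheory.volume (-1) s := by
    refine hfl.neg.congr_ae ?_
    refine (MeasureTheory.ae_restrict_iff' measurableSet_uIoc).mpr (MeasureTheory.ae_of_all _ ?_)
    intro y hy
    rw [Set.uIoc_of_le hs.le] at hy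
    show -((y - s) * ((1 - y^2) ^ (lam - 1/2) * gegen lam (m+2) y))
      = |y - s| * (1 - y^2) ^ (lam - 1/2) * gegen lam (m+2) y
    rw [abs_of_nonpos (by linarith [hy.2] : y - s ≤ 0)]
    ring
  rw [← intervalIntegral.integral_add_adjacent_intervals hfal hfar]
  have e1 : ∫ y in s..1, fa y = V 1 - V s := by
    rw [← ftc1]
    apply intervalIntegral.integral_congr
    intro y hy
    rw [Set.uIcc_of_le hs'.le] at hy
    show |y - s| * (1 - y^2) ^ (lam - 1/2) * gegen lam (m+2) y
      = (y - s) * ((1 - y^2) ^ (lam - 1/2) * gegen lam (m+2) y)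
    rw [abs_of_nonneg (by linarith [hy.1] : (0:ℝ) ≤ y - s)]
    ring
  have e2 : ∫ y in (-1:ℝ)..s, fa y = -(V s - V (-1)) := by
    rw [← ftc2, ← intervalIntegral.integral_neg]
    apply intervalIntegral.integral_congr
    intro y hy
    rw [Set.uIcc_of_le hs.le] at hy
    show |y - s| * (1 - y^2) ^ (lam - 1/2) * gegen lam (m+2) y
      = -((y - s) * ((1 - y^2) ^ (lam - 1/2) * gegen lam (m+2) y))
    rw [abs_of_nonpos (by linarith [hy.2] : y - s ≤ 0)]
    ring
  have hV1 : V 1 = 0 := by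
    rw [hVdef]
    simp only
    rw [show (1 - (1:ℝ)^2) = 0 from by norm_num, Real.zero_rpow hlam12.ne',
      Real.zero_rpow hlam32.ne']
    ring
  have hVm1 : V (-1) = 0 := by
    rw [hVdef]
    simp only
    rw [show (1 - (-1:ℝ)^2) = 0 from by norm_num, Real.zero_rpow hlam12.ne',
      Real.zero_rpow hlam32.ne']
    ring
  have hVs : V s = -((1/(δ*β)) * ((1 - s^2) ^ (lam + 3/2) * gegen (lam+2) m s)) := by
    rw [hVdef]
    simp only
    rw [sub_self s]
    ring
  rw [e1, e2, hV1, hVm1, hVs]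
  push_cast
  rw [hδdef, hβdef]
  have h1 : ((m:ℝ)+2) ≠ 0 := by positivity
  have h2 : ((m:ℝ)+1) ≠ 0 := by positivity
  have h3 : ((m:ℝ)+2+2*lam) ≠ 0 := by nlinarith
  have h4 : ((m:ℝ)+2*lam+3) ≠ 0 := by nlinarith
  have h5 : lam ≠ 0 := hl0
  have h6 : lam + 1 ≠ 0 := hlam1.ne'
  have h7 : ((m:ℝ)+2-1) ≠ 0 := ne_of_gt (by nlinarith)
  have h8 : ((m:ℝ)+2+2*lam+1) ≠ 0 := ne_of_gt (by nlinarith)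
  have h9 : (2*lam) ≠ 0 := by simpa using hl0
  have h10 : (2*(lam+1)) ≠ 0 := by positivity
  field_simp
  ring
end

section
/- Fix an integer n ≥ 3, 0 < ρ < 1, δ = ((n-2)/n)ρ, and real t, z with -1 < t, z < 1 and 1 - δ²t² - t² - z² + 2δt²z > 0. Let Q := 1 - δ²t² - t² - z² + 2δt²z, A := (1-2ρz+ρ²)(1-t²). Then the expression A² − (2n/(n-2)) A Q + (n²/(n-2)²) Q² = (A − (n/(n-2)) Q)² is nonnegative; consequently the function L(t,z) := 2(1-δ²t²)^{(n-3)/2}(1-2ρz+ρ²)^{-(n-2)/2} K̃_{(n-2)/2}(δt,t,z) − (4n/(n-1))(1-δ²t²)^{(n-1)/2}(1-2ρz+ρ²)^{-n/2} K̃_{n/2}(δt,t,z) + (2n³/((n+1)(n-1)(n-2)))(1-δ²t²)^{(n+1)/2}(1-2ρz+ρ²)^{-(n+2)/2} K̃_{(n+2)/2}(δt,t,z) is nonnegative on the region Ω = {(t,z) ∈ (-1,1)² : Q > 0}. -/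
open scoped Real BigOperators

/-- The (unextended) kernel in the variant of Gegenbauer's product formula. -/
noncomputable def Ktilde (lam x y z : ℝ) : ℝ :=
  Real.Gamma (lam + 1/2) / (Real.Gamma lam * Real.Gamma (1/2))
    * (1 - x^2 - y^2 - z^2 + 2*x*y*z) ^ (lam - 1)
    / ((1 - x^2) ^ (lam - 1/2) * (1 - y^2) ^ (lam - 1/2))

set_option maxHeartbeats 1000000 in
theorem L_nonneg (n : ℕ) (hn : 3 ≤ n) (ρ δ : ℝ) (hρ : 0 < ρ) (hρ' : ρ < 1)
    (hδ : δ = ((n:ℝ) - 2)/(n:ℝ) * ρ) (t z : ℝ)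
    (ht : -1 < t) (ht' : t < 1) (hz : -1 < z) (hz' : z < 1)
    (Q A : ℝ) (hQdef : Q = 1 - δ^2*t^2 - t^2 - z^2 + 2*δ*t^2*z)
    (hA : A = (1 - 2*ρ*z + ρ^2)*(1 - t^2)) (hQ : 0 < Q) :
    (A^2 - 2*(n:ℝ)/((n:ℝ) - 2)*A*Q + (n:ℝ)^2/((n:ℝ) - 2)^2*Q^2
        = (A - (n:ℝ)/((n:ℝ) - 2)*Q)^2) ∧
    0 ≤ 2*(1 - δ^2*t^2) ^ (((n:ℝ) - 3)/2) * (1 - 2*ρ*z + ρ^2) ^ (-(((n:ℝ) - 2)/2))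
          * Ktilde (((n:ℝ) - 2)/2) (δ*t) t z
        - 4*(n:ℝ)/((n:ℝ) - 1) * (1 - δ^2*t^2) ^ (((n:ℝ) - 1)/2)
          * (1 - 2*ρ*z + ρ^2) ^ (-((n:ℝ)/2)) * Ktilde ((n:ℝ)/2) (δ*t) t z
        + 2*(n:ℝ)^3/(((n:ℝ) + 1)*((n:ℝ) - 1)*((n:ℝ) - 2))
          * (1 - δ^2*t^2) ^ (((n:ℝ) + 1)/2)
          * (1 - 2*ρ*z + ρ^2) ^ (-(((n:ℝ) + 2)/2)) * Ktilde (((n:ℝ) + 2)/2) (δ*t) t z := by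
  have hn3 : (3:ℝ) ≤ (n:ℝ) := by exact_mod_cast hn
  set N : ℝ := (n:ℝ) with hN
  have hN2 : (0:ℝ) < N - 2 := by linarith
  have hN1 : (0:ℝ) < N - 1 := by linarith
  have hN0 : (0:ℝ) < N := by linarith
  have hNp1 : (0:ℝ) < N + 1 := by linarith
  have hu : (0:ℝ) < 1 - t^2 := by nlinarith
  have hs : (0:ℝ) < 1 - 2*ρ*z + ρ^2 := by
    nlinarith [sq_nonneg (1-ρ), mul_pos hρ (show (0:ℝ) < 1 - z by linarith)]
  have hδ0 : 0 ≤ δ := by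
    rw [hδ]; exact mul_nonneg (div_nonneg (by linarith) hN0.le) hρ.le
  have hδρ : δ ≤ ρ := by
    rw [hδ, div_mul_eq_mul_div, div_le_iff₀ hN0]; nlinarith
  have hδ1 : δ < 1 := lt_of_le_of_lt hδρ hρ'
  have hv : (0:ℝ) < 1 - δ^2*t^2 := by
    have h1 : δ^2 < 1 := by nlinarith
    have h2 : t^2 < 1 := by nlinarith
    nlinarith [mul_le_mul_of_nonneg_left h2.le (sq_nonneg δ)]
  have hG : 0 < Real.Gamma ((N-2)/2) := Real.Gamma_pos_of_pos (by linarith)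
  have hH : 0 < Real.Gamma ((N-1)/2) := Real.Gamma_pos_of_pos (by linarith)
  have hΓh : 0 < Real.Gamma (1/2) := Real.Gamma_pos_of_pos (by norm_num)
  have h2pow : ∀ a : ℝ, a ^ (2:ℝ) = a ^ 2 := by
    intro a
    rw [show (2:ℝ) = ((2:ℕ):ℝ) by norm_num, Real.rpow_natCast]
  -- Gamma recurrences
  have gm1 : Real.Gamma (N/2) = (N-2)/2 * Real.Gamma ((N-2)/2) := by
    rw [show N/2 = (N-2)/2 + 1 by ring, Real.Gamma_add_one (by positivity)]
  have gm2 : Real.Gamma ((N+2)/2) = N/2 * ((N-2)/2 * Real.Gamma ((N-2)/2)) := by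
    rw [show (N+2)/2 = N/2 + 1 by ring, Real.Gamma_add_one (by positivity), gm1]
  have gh1 : Real.Gamma ((N+1)/2) = (N-1)/2 * Real.Gamma ((N-1)/2) := by
    rw [show (N+1)/2 = (N-1)/2 + 1 by ring, Real.Gamma_add_one (by positivity)]
  have gh2 : Real.Gamma ((N+3)/2) = (N+1)/2 * ((N-1)/2 * Real.Gamma ((N-1)/2)) := by
    rw [show (N+3)/2 = (N+1)/2 + 1 by ring, Real.Gamma_add_one (by positivity), gh1]
  have c2 : (N-1)/2 * Real.Gamma ((N-1)/2)
      / ((N-2)/2 * Real.Gamma ((N-2)/2) * Real.Gamma (1/2))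
      = (N-1)/(N-2) * (Real.Gamma ((N-1)/2) / (Real.Gamma ((N-2)/2) * Real.Gamma (1/2))) := by
    field_simp [hG.ne', hΓh.ne', hN2.ne']
  have c3 : (N+1)/2 * ((N-1)/2 * Real.Gamma ((N-1)/2))
      / (N/2 * ((N-2)/2 * Real.Gamma ((N-2)/2)) * Real.Gamma (1/2))
      = (N+1)*(N-1)/(N*(N-2))
        * (Real.Gamma ((N-1)/2) / (Real.Gamma ((N-2)/2) * Real.Gamma (1/2))) := by
    field_simp [hG.ne', hΓh.ne', hN2.ne', hN0.ne']
  -- evaluation of the three kernels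
  have hK1 : Ktilde ((N-2)/2) (δ*t) t z
      = Real.Gamma ((N-1)/2) / (Real.Gamma ((N-2)/2) * Real.Gamma (1/2))
        * Q ^ ((N-4)/2) / ((1-δ^2*t^2) ^ ((N-3)/2) * (1-t^2) ^ ((N-3)/2)) := by
    simp only [Ktilde]
    rw [show 1 - (δ*t)^2 - t^2 - z^2 + 2*(δ*t)*t*z = Q by rw [hQdef]; ring,
        show 1 - (δ*t)^2 = 1 - δ^2*t^2 by ring,
        show (N-2)/2 + 1/2 = (N-1)/2 by ring,
        show (N-2)/2 - 1 = (N-4)/2 by ring,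
        show (N-2)/2 - 1/2 = (N-3)/2 by ring]
  have hK2 : Ktilde (N/2) (δ*t) t z
      = (N-1)/(N-2) * (Real.Gamma ((N-1)/2) / (Real.Gamma ((N-2)/2) * Real.Gamma (1/2)))
        * Q ^ ((N-2)/2) / ((1-δ^2*t^2) ^ ((N-1)/2) * (1-t^2) ^ ((N-1)/2)) := by
    simp only [Ktilde]
    rw [show 1 - (δ*t)^2 - t^2 - z^2 + 2*(δ*t)*t*z = Q by rw [hQdef]; ring,
        show 1 - (δ*t)^2 = 1 - δ^2*t^2 by ring,
        show N/2 + 1/2 = (N+1)/2 by ring,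
        show N/2 - 1 = (N-2)/2 by ring,
        show N/2 - 1/2 = (N-1)/2 by ring, gh1, gm1, c2]
  have hK3 : Ktilde ((N+2)/2) (δ*t) t z
      = (N+1)*(N-1)/(N*(N-2))
          * (Real.Gamma ((N-1)/2) / (Real.Gamma ((N-2)/2) * Real.Gamma (1/2)))
        * Q ^ (N/2) / ((1-δ^2*t^2) ^ ((N+1)/2) * (1-t^2) ^ ((N+1)/2)) := by
    simp only [Ktilde]
    rw [show 1 - (δ*t)^2 - t^2 - z^2 + 2*(δ*t)*t*z = Q by rw [hQdef]; ring,
        show 1 - (δ*t)^2 = 1 - δ^2*t^2 by ring,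
        show (N+2)/2 + 1/2 = (N+3)/2 by ring,
        show (N+2)/2 - 1 = N/2 by ring,
        show (N+2)/2 - 1/2 = (N+1)/2 by ring, gh2, gm2, c3]
  -- rpow splittings
  have hQa : Q ^ ((N-2)/2) = Q ^ ((N-4)/2) * Q := by
    rw [show (N-2)/2 = (N-4)/2 + 1 by ring, Real.rpow_add hQ, Real.rpow_one]
  have hQb : Q ^ (N/2) = Q ^ ((N-4)/2) * Q ^ 2 := by
    rw [show N/2 = (N-4)/2 + 2 by ring, Real.rpow_add hQ, h2pow]
  have hm1 : (1-2*ρ*z+ρ^2) ^ (-1:ℝ) = (1-2*ρ*z+ρ^2)⁻¹ := by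
    rw [Real.rpow_neg hs.le, Real.rpow_one]
  have hm2 : (1-2*ρ*z+ρ^2) ^ (-2:ℝ) = ((1-2*ρ*z+ρ^2) ^ 2)⁻¹ := by
    rw [Real.rpow_neg hs.le, h2pow]
  have hSa : (1-2*ρ*z+ρ^2) ^ (-(N/2))
      = (1-2*ρ*z+ρ^2) ^ (-((N-2)/2)) * (1-2*ρ*z+ρ^2)⁻¹ := by
    rw [show -(N/2) = -((N-2)/2) + -1 by ring, Real.rpow_add hs, hm1]
  have hSb : (1-2*ρ*z+ρ^2) ^ (-((N+2)/2))
      = (1-2*ρ*z+ρ^2) ^ (-((N-2)/2)) * ((1-2*ρ*z+ρ^2) ^ 2)⁻¹ := by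
    rw [show -((N+2)/2) = -((N-2)/2) + -2 by ring, Real.rpow_add hs, hm2]
  have hUa : (1-t^2) ^ ((N-1)/2) = (1-t^2) ^ ((N-3)/2) * (1-t^2) := by
    rw [show (N-1)/2 = (N-3)/2 + 1 by ring, Real.rpow_add hu, Real.rpow_one]
  have hUb : (1-t^2) ^ ((N+1)/2) = (1-t^2) ^ ((N-3)/2) * (1-t^2) ^ 2 := by
    rw [show (N+1)/2 = (N-3)/2 + 2 by ring, Real.rpow_add hu, h2pow]
  have p1 : 0 < Q ^ ((N-4)/2) := Real.rpow_pos_of_pos hQ _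
  have p2 : 0 < (1-2*ρ*z+ρ^2) ^ (-((N-2)/2)) := Real.rpow_pos_of_pos hs _
  have p3 : 0 < (1-t^2) ^ ((N-3)/2) := Real.rpow_pos_of_pos hu _
  have pv1 : 0 < (1-δ^2*t^2) ^ ((N-3)/2) := Real.rpow_pos_of_pos hv _
  have pv2 : 0 < (1-δ^2*t^2) ^ ((N-1)/2) := Real.rpow_pos_of_pos hv _
  have pv3 : 0 < (1-δ^2*t^2) ^ ((N+1)/2) := Real.rpow_pos_of_pos hv _
  constructor
  · field_simp
    ring
  · rw [hK1, hK2, hK3, hSa, hSb, hQa, hQb, hUa, hUb]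
    set g := Real.Gamma ((N-1)/2) / (Real.Gamma ((N-2)/2) * Real.Gamma (1/2)) with hgdef
    set Qp := Q ^ ((N-4)/2) with hQpdef
    set Sp := (1-2*ρ*z+ρ^2) ^ (-((N-2)/2)) with hSpdef
    set Up := (1-t^2) ^ ((N-3)/2) with hUpdef
    set V1 := (1-δ^2*t^2) ^ ((N-3)/2) with hV1def
    set V2 := (1-δ^2*t^2) ^ ((N-1)/2) with hV2def
    set V3 := (1-δ^2*t^2) ^ ((N+1)/2) with hV3def
    set S := 1-2*ρ*z+ρ^2 with hSdef
    set U := 1-t^2 with hUdef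
    have e1 : 2 * V1 * Sp * (g * Qp / (V1 * Up)) = 2 * (g * Qp * Sp / Up) := by
      field_simp [pv1.ne', p3.ne']
    have e2 : 4 * N / (N - 1) * V2 * (Sp * S⁻¹) *
          ((N - 1) / (N - 2) * g * (Qp * Q) / (V2 * (Up * U)))
        = 4 * N / (N - 2) * (g * Qp * Sp / Up) * (Q / (S * U)) := by
      field_simp [pv2.ne', hs.ne', hu.ne', hN2.ne', hN1.ne', p3.ne']
    have e3 : 2 * N ^ 3 / ((N + 1) * (N - 1) * (N - 2)) * V3 * (Sp * (S ^ 2)⁻¹) *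
          ((N + 1) * (N - 1) / (N * (N - 2)) * g * (Qp * Q ^ 2) / (V3 * (Up * U ^ 2)))
        = 2 * N ^ 2 / (N - 2) ^ 2 * (g * Qp * Sp / Up) * (Q / (S * U)) ^ 2 := by
      field_simp [pv3.ne', hs.ne', hu.ne', hN2.ne', hN1.ne', hN0.ne', hNp1.ne', p3.ne']
    rw [e1, e2, e3]
    set F := g * Qp * Sp / Up with hFdef
    set r := Q / (S * U) with hrdef
    have key : 2 * F - 4 * N / (N - 2) * F * r + 2 * N ^ 2 / (N - 2) ^ 2 * F * r ^ 2
        = 2 * F * (1 - N / (N - 2) * r) ^ 2 := by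
      field_simp
      ring
    rw [key]
    have hF : 0 < F := by
      rw [hFdef]
      exact div_pos (mul_pos (mul_pos (div_pos hH (mul_pos hG hΓh)) p1) p2) p3
    exact mul_nonneg (mul_nonneg (by norm_num) hF.le) (sq_nonneg _)
end

section
/- Fix an integer n ≥ 3, 0 < ρ < 1, and set δ = ((n-2)/n)ρ. Define G(t) := (n-2)ρt ∫_{-1}^{1} |δt - x|(1-x²)^{(n-3)/2} x dx for t ∈ (-1,1). Then G is twice differentiable on (-1,1) with G''(t) = 2(n-2)ρδ³t²(1-δ²t²)^{(n-3)/2} − (4(n-2)/(n-1))ρδ(1-δ²t²)^{(n-1)/2}. -/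
open scoped Real BigOperators

lemma aux_wcont (p : ℝ) (hp : 0 ≤ p) : Continuous fun x : ℝ => (1 - x^2) ^ p := by
  apply continuous_iff_continuousAt.2
  intro x
  exact (Real.continuousAt_rpow_const _ _ (Or.inr hp)).comp
    ((continuous_const.sub (continuous_pow 2)).continuousAt)

lemma aux_inner (b t : ℝ) : HasDerivAt (fun t : ℝ => 1 - (b*t)^2) (-(2*b^2*t)) t := by
  have h : HasDerivAt (fun t : ℝ => b*t) b t := by
    simpa using (hasDerivAt_id t).const_mul b
  have := (h.pow 2).const_sub 1
  refine this.congr_deriv ?_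
  ring

lemma aux_rpow_comp (q : ℝ) (hq : 1 ≤ q) {g : ℝ → ℝ} {g' t : ℝ} (hg : HasDerivAt g g' t) :
    HasDerivAt (fun t => (g t) ^ q) (q * (g t) ^ (q-1) * g') t := by
  exact (Real.hasDerivAt_rpow_const (Or.inr hq)).comp t hg

lemma aux_intL (p : ℝ) (hp : 0 ≤ p) (a : ℝ) :
    ∫ x in a..1, x * (1-x^2)^p = (1-a^2)^(p+1) / (2*(p+1)) := by
  have hq : (1:ℝ) ≤ p + 1 := by linarith
  have hp1 : p + 1 ≠ 0 := by positivity
  have hderiv : ∀ x ∈ Set.uIcc a 1,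
      HasDerivAt (fun x : ℝ => -(1-x^2)^(p+1) / (2*(p+1))) (x * (1-x^2)^p) x := by
    intro x _
    have h1 : HasDerivAt (fun x : ℝ => (1-x^2)^(p+1))
        ((p+1) * (1-x^2)^(p+1-1) * (-(2*1^2*x))) x := by
      have := aux_rpow_comp (p+1) hq (aux_inner 1 x)
      simpa using this
    have h2 := (h1.neg).div_const (2*(p+1))
    refine h2.congr_deriv ?_
    rw [show p + 1 - 1 = p by ring]
    field_simp
  have hint : IntervalIntegrable (fun x : ℝ => x * (1-x^2)^p) MeasureTheory.volume a 1 :=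
    (continuous_id.mul (aux_wcont p hp)).intervalIntegrable a 1
  rw [intervalIntegral.integral_eq_sub_of_hasDerivAt hderiv hint]
  have : ((1:ℝ) - 1^2) = 0 := by norm_num
  rw [this, Real.zero_rpow hp1]
  ring

lemma aux_Ival (p : ℝ) (hp : 0 ≤ p) (a : ℝ) (ha : -1 ≤ a) (ha' : a ≤ 1) :
    ∫ x in (-1:ℝ)..1, |a - x| * (1-x^2)^p * x
      = -(∫ x in (-1:ℝ)..1, x^2 * (1-x^2)^p)
        + 2*(∫ x in a..1, x^2 * (1-x^2)^p)
        - 2*a*((1-a^2)^(p+1) / (2*(p+1))) := by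
  have hw := aux_wcont p hp
  have hcf : Continuous fun x : ℝ => |a - x| * (1-x^2)^p * x :=
    (((continuous_const.sub continuous_id).abs.mul hw).mul continuous_id)
  have hc1 : Continuous fun x : ℝ => (a - x) * (1-x^2)^p * x :=
    ((continuous_const.sub continuous_id).mul hw).mul continuous_id
  have hc2 : Continuous fun x : ℝ => (x - a) * (1-x^2)^p * x :=
    ((continuous_id.sub continuous_const).mul hw).mul continuous_id
  have hcL : Continuous fun x : ℝ => x * (1-x^2)^p := continuous_id.mul hw
  have hcK : Continuous fun x : ℝ => x^2 * (1-x^2)^p := (continuous_pow 2).mul hw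
  -- split integral at a
  have hsplit : ∫ x in (-1:ℝ)..1, |a - x| * (1-x^2)^p * x
      = (∫ x in (-1:ℝ)..a, |a - x| * (1-x^2)^p * x)
        + ∫ x in a..1, |a - x| * (1-x^2)^p * x :=
    (intervalIntegral.integral_add_adjacent_intervals (hcf.intervalIntegrable _ _)
      (hcf.intervalIntegrable _ _)).symm
  have he1 : (∫ x in (-1:ℝ)..a, |a - x| * (1-x^2)^p * x)
      = ∫ x in (-1:ℝ)..a, (a - x) * (1-x^2)^p * x := by
    apply intervalIntegral.integral_congr
    intro x hx
    rw [Set.uIcc_of_le ha] at hx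
    dsimp only
    rw [abs_of_nonneg (by linarith [hx.2])]
  have he2 : (∫ x in a..(1:ℝ), |a - x| * (1-x^2)^p * x)
      = ∫ x in a..(1:ℝ), (x - a) * (1-x^2)^p * x := by
    apply intervalIntegral.integral_congr
    intro x hx
    rw [Set.uIcc_of_le ha'] at hx
    dsimp only
    rw [abs_of_nonpos (by linarith [hx.1]), neg_sub]
  have hsplit2 : (∫ x in (-1:ℝ)..a, (a - x) * (1-x^2)^p * x)
      = (∫ x in (-1:ℝ)..1, (a - x) * (1-x^2)^p * x)
        - ∫ x in a..(1:ℝ), (a - x) * (1-x^2)^p * x := by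
    rw [← intervalIntegral.integral_add_adjacent_intervals (hc1.intervalIntegrable (-1) a)
      (hc1.intervalIntegrable a 1)]
    ring
  -- expand the two pieces
  have hfull : (∫ x in (-1:ℝ)..1, (a - x) * (1-x^2)^p * x)
      = a * (∫ x in (-1:ℝ)..1, x * (1-x^2)^p) - ∫ x in (-1:ℝ)..1, x^2 * (1-x^2)^p := by
    rw [← intervalIntegral.integral_const_mul, ← intervalIntegral.integral_sub (f := fun x : ℝ => a * (x * (1-x^2)^p))
      ((continuous_const.mul hcL).intervalIntegrable _ _) (hcK.intervalIntegrable _ _)]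
    apply intervalIntegral.integral_congr
    intro x _
    ring
  have hpartA : (∫ x in a..(1:ℝ), (a - x) * (1-x^2)^p * x)
      = a * (∫ x in a..(1:ℝ), x * (1-x^2)^p) - ∫ x in a..(1:ℝ), x^2 * (1-x^2)^p := by
    rw [← intervalIntegral.integral_const_mul, ← intervalIntegral.integral_sub (f := fun x : ℝ => a * (x * (1-x^2)^p))
      ((continuous_const.mul hcL).intervalIntegrable _ _) (hcK.intervalIntegrable _ _)]
    apply intervalIntegral.integral_congr
    intro x _
    ring
  have hpartB : (∫ x in a..(1:ℝ), (x - a) * (1-x^2)^p * x)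
      = (∫ x in a..(1:ℝ), x^2 * (1-x^2)^p) - a * ∫ x in a..(1:ℝ), x * (1-x^2)^p := by
    rw [← intervalIntegral.integral_const_mul, ← intervalIntegral.integral_sub (g := fun x : ℝ => a * (x * (1-x^2)^p))
      (hcK.intervalIntegrable _ _) ((continuous_const.mul hcL).intervalIntegrable _ _)]
    apply intervalIntegral.integral_congr
    intro x _
    ring
  have hL0 : (∫ x in (-1:ℝ)..1, x * (1-x^2)^p) = 0 := by
    rw [aux_intL p hp]
    norm_num
    rw [Real.zero_rpow (by positivity)]
    simp
  have hLa := aux_intL p hp a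
  rw [hsplit, he1, he2, hsplit2, hfull, hpartA, hpartB, hL0, hLa]
  ring

noncomputable def Haux (c δ p : ℝ) : ℝ → ℝ := fun t =>
  c*t*(-(∫ x in (-1:ℝ)..1, x^2*(1-x^2)^p) + 2*(∫ x in (δ*t)..1, x^2*(1-x^2)^p)
    - 2*(δ*t)*((1-(δ*t)^2)^(p+1)/(2*(p+1))))

noncomputable def H1aux (c δ p : ℝ) : ℝ → ℝ := fun t =>
  -(c*(∫ x in (-1:ℝ)..1, x^2*(1-x^2)^p)) + 2*c*(∫ x in (δ*t)..1, x^2*(1-x^2)^p)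
    - (2*c*δ/(p+1))*t*(1-(δ*t)^2)^(p+1)

lemma aux_Kd (p : ℝ) (hp : 0 ≤ p) (a : ℝ) :
    HasDerivAt (fun a : ℝ => ∫ x in a..1, x^2*(1-x^2)^p) (-(a^2*(1-a^2)^p)) a := by
  have hcK : Continuous fun x : ℝ => x^2 * (1-x^2)^p := (continuous_pow 2).mul (aux_wcont p hp)
  exact intervalIntegral.integral_hasDerivAt_left (hcK.intervalIntegrable a 1)
    (hcK.stronglyMeasurableAtFilter _ _) hcK.continuousAt

lemma aux_Kcomp (p : ℝ) (hp : 0 ≤ p) (δ t : ℝ) :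
    HasDerivAt (fun t : ℝ => ∫ x in (δ*t)..1, x^2*(1-x^2)^p)
      (-((δ*t)^2*(1-(δ*t)^2)^p) * δ) t := by
  have hδt : HasDerivAt (fun t : ℝ => δ*t) δ t := by
    simpa using (hasDerivAt_id t).const_mul δ
  exact (aux_Kd p hp (δ*t)).comp t hδt

lemma Haux_hasDeriv (c δ p : ℝ) (hp : 0 ≤ p) (t : ℝ) :
    HasDerivAt (Haux c δ p) (H1aux c δ p t) t := by
  have hq : (1:ℝ) ≤ p + 1 := by linarith
  have hp1 : p + 1 ≠ 0 := by positivity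
  have h1 := aux_Kcomp p hp δ t
  have h2 : HasDerivAt (fun t : ℝ => (1-(δ*t)^2)^(p+1))
      ((p+1)*(1-(δ*t)^2)^(p+1-1)*(-(2*δ^2*t))) t := aux_rpow_comp (p+1) hq (aux_inner δ t)
  have heq : Haux c δ p = fun t =>
      c*(-(∫ x in (-1:ℝ)..1, x^2*(1-x^2)^p))*t
      + (2*c)*(t*(∫ x in (δ*t)..1, x^2*(1-x^2)^p))
      - (c*δ/(p+1))*(t^2*(1-(δ*t)^2)^(p+1)) := by
    funext s
    simp only [Haux]
    field_simp
  rw [heq]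
  have hD := ((((hasDerivAt_id t).const_mul
      (c*(-(∫ x in (-1:ℝ)..1, x^2*(1-x^2)^p)))).add
      (((hasDerivAt_id t).mul h1).const_mul (2*c))).sub
      ((((hasDerivAt_pow 2 t).mul h2)).const_mul (c*δ/(p+1))))
  refine hD.congr_deriv ?_
  simp only [H1aux, id]
  rw [show p + 1 - 1 = p by ring]
  push_cast
  field_simp
  ring

lemma H1aux_hasDeriv (c δ p : ℝ) (hp : 0 ≤ p) (t : ℝ) :
    HasDerivAt (H1aux c δ p)
      (2*c*δ^3*t^2*(1-(δ*t)^2)^p - (2*c*δ/(p+1))*(1-(δ*t)^2)^(p+1)) t := by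
  have hq : (1:ℝ) ≤ p + 1 := by linarith
  have hp1 : p + 1 ≠ 0 := by positivity
  have h1 := aux_Kcomp p hp δ t
  have h2 : HasDerivAt (fun t : ℝ => (1-(δ*t)^2)^(p+1))
      ((p+1)*(1-(δ*t)^2)^(p+1-1)*(-(2*δ^2*t))) t := aux_rpow_comp (p+1) hq (aux_inner δ t)
  have heq : H1aux c δ p = fun t =>
      -(c*(∫ x in (-1:ℝ)..1, x^2*(1-x^2)^p))
      + (2*c)*(∫ x in (δ*t)..1, x^2*(1-x^2)^p)
      - (2*c*δ/(p+1))*(t*(1-(δ*t)^2)^(p+1)) := by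
    funext s
    simp only [H1aux]
    ring
  rw [heq]
  have hD := (((hasDerivAt_const t
      (-(c*(∫ x in (-1:ℝ)..1, x^2*(1-x^2)^p)))).add (h1.const_mul (2*c))).sub
      (((hasDerivAt_id t).mul h2).const_mul (2*c*δ/(p+1))))
  refine hD.congr_deriv ?_
  simp only [id]
  rw [show p + 1 - 1 = p by ring]
  field_simp
  ring

theorem second_derivative_of_G (n : ℕ) (hn : 3 ≤ n) (ρ δ : ℝ)
    (hρ : 0 < ρ) (hρ' : ρ < 1) (hδ : δ = ((n:ℝ) - 2)/(n:ℝ) * ρ)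
    (G : ℝ → ℝ)
    (hG : ∀ t : ℝ, G t = ((n:ℝ) - 2)*ρ*t
        * ∫ x in (-1:ℝ)..1, |δ*t - x| * (1 - x^2) ^ (((n:ℝ) - 3)/2) * x) :
    (∀ t ∈ Set.Ioo (-1:ℝ) 1, DifferentiableAt ℝ G t ∧ DifferentiableAt ℝ (deriv G) t) ∧
    ∀ t ∈ Set.Ioo (-1:ℝ) 1,
      deriv (deriv G) t
        = 2*((n:ℝ) - 2)*ρ*δ^3*t^2*(1 - δ^2*t^2) ^ (((n:ℝ) - 3)/2)
          - 4*((n:ℝ) - 2)/((n:ℝ) - 1)*ρ*δ*(1 - δ^2*t^2) ^ (((n:ℝ) - 1)/2) := by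

  have hn3 : (3:ℝ) ≤ (n:ℝ) := by exact_mod_cast hn
  set p : ℝ := ((n:ℝ) - 3)/2 with hp_def
  have hp : 0 ≤ p := by rw [hp_def]; linarith
  set c : ℝ := ((n:ℝ) - 2)*ρ with hc_def
  have hδ0 : 0 < δ := by
    rw [hδ]
    exact mul_pos (div_pos (by linarith) (by linarith)) hρ
  have hδ1 : δ < 1 := by
    rw [hδ]
    have h1 : ((n:ℝ)-2)/(n:ℝ) < 1 := (div_lt_one (by linarith)).2 (by linarith)
    have h0 : 0 < ((n:ℝ)-2)/(n:ℝ) := div_pos (by linarith) (by linarith)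
    nlinarith
  -- G agrees with Haux on Ioo (-1) 1
  have hGH : ∀ t ∈ Set.Ioo (-1:ℝ) 1, G t = Haux c δ p t := by
    intro t ht
    have h1 : -1 ≤ δ*t := by nlinarith [ht.1, ht.2]
    have h2 : δ*t ≤ 1 := by nlinarith [ht.1, ht.2]
    rw [hG t, aux_Ival p hp (δ*t) h1 h2]
    simp only [Haux, hc_def]
  have hev : ∀ t ∈ Set.Ioo (-1:ℝ) 1, G =ᶠ[nhds t] Haux c δ p := fun t ht =>
    Filter.eventuallyEq_of_mem (isOpen_Ioo.mem_nhds ht) hGH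
  have hderivH : deriv (Haux c δ p) = H1aux c δ p :=
    funext fun s => (Haux_hasDeriv c δ p hp s).deriv
  constructor
  · intro t ht
    refine ⟨(hev t ht).differentiableAt_iff.mpr (Haux_hasDeriv c δ p hp t).differentiableAt, ?_⟩
    refine ((hev t ht).deriv.differentiableAt_iff).mpr ?_
    rw [hderivH]
    exact (H1aux_hasDeriv c δ p hp t).differentiableAt
  · intro t ht
    have e1 : deriv (deriv G) t = deriv (deriv (Haux c δ p)) t := ((hev t ht).deriv).deriv_eq
    rw [e1, hderivH, (H1aux_hasDeriv c δ p hp t).deriv]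
    have hb : (1:ℝ) - (δ*t)^2 = 1 - δ^2*t^2 := by ring
    have he : p + 1 = ((n:ℝ) - 1)/2 := by rw [hp_def]; ring
    rw [hb, he, hc_def]
    have hn1 : ((n:ℝ) - 1) ≠ 0 := by linarith
    field_simp
    ring
end
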